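/- Let X be a δ-hyperbolic geodesic metric space, let f ∈ Isom(X) be a hyperbolic isometry, let x ∈ X, and let τ ≥ 1 satisfy (1/τ)|m−n| ≤ d(f^m x, f^n x) ≤ τ|m−n| for all m,n ∈ ℤ. Set A = { f^n x : n ∈ ℤ } and, for z ∈ X, let π_z = { x' ∈ A : d(x',z) = inf_{a ∈ A} d(a,z) } denote the set of points of A nearest to z. Then there is a constant D ≥ 0, depending only on δ and τ, such that for every z ∈ X and every x_z ∈ π_z: d(x,z) ≥ d(x,x_z) + d(x_z,z) − D. -/

import Mathlib

open Filter Metric Set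

noncomputable section

universe u

variable {X : Type u} [MetricSpace X]

/-- The Gromov product `(x·y)_w = ½(d(x,w) + d(w,y) − d(x,y))`. -/
def gromovProduct (w x y : X) : ℝ := (dist x w + dist w y - dist x y) / 2

/-- `γ` is a geodesic from `x` to `y`, parametrized by arc length on `[0, dist x y]`. -/
structure IsGeodesicSegment (γ : ℝ → X) (x y : X) : Prop where
  source : γ 0 = x
  target : γ (dist x y) = y
  isom : ∀ ⦃s t : ℝ⦄, s ∈ Set.Icc (0 : ℝ) (dist x y) → t ∈ Set.Icc (0 : ℝ) (dist x y) →
    dist (γ s) (γ t) = |s - t|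

/-- A geodesic metric space is `δ`-hyperbolic: every pair of points is joined by a
geodesic, every geodesic triangle is `δ`-slim, every geodesic triangle has insize at
most `δ`, and the Gromov product is `δ`-hyperbolic. -/
structure IsDeltaHyperbolic (X : Type u) [MetricSpace X] (δ : ℝ) : Prop where
  delta_nonneg : 0 ≤ δ
  geodesic : ∀ x y : X, ∃ γ : ℝ → X, IsGeodesicSegment γ x y
  slim : ∀ (x y z : X) (α β γ : ℝ → X),
    IsGeodesicSegment α y z → IsGeodesicSegment β z x → IsGeodesicSegment γ x y →
    ∀ s ∈ Set.Icc (0 : ℝ) (dist y z),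
      (∃ t ∈ Set.Icc (0 : ℝ) (dist z x), dist (α s) (β t) ≤ δ) ∨
      (∃ t ∈ Set.Icc (0 : ℝ) (dist x y), dist (α s) (γ t) ≤ δ)
  insize : ∀ (x y z : X) (α β γ : ℝ → X),
    IsGeodesicSegment α y z → IsGeodesicSegment β z x → IsGeodesicSegment γ x y →
    dist (α (gromovProduct y x z)) (β (gromovProduct z x y)) ≤ δ ∧
    dist (β (gromovProduct z x y)) (γ (gromovProduct x y z)) ≤ δ ∧
    dist (γ (gromovProduct x y z)) (α (gromovProduct y x z)) ≤ δ
  gromov : ∀ w x y z : X,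
    min (gromovProduct w x y) (gromovProduct w y z) - δ ≤ gromovProduct w x z

/-- An isometry `f` of `X` is hyperbolic if for every `x ∈ X` there is `t > 0` with
`t|m − n| ≤ d(f^m x, f^n x)` for all integers `m, n`. -/
def IsHyperbolicIsometry (f : X ≃ᵢ X) : Prop :=
  ∀ x : X, ∃ t : ℝ, 0 < t ∧
    ∀ m n : ℤ, t * |(m : ℝ) - (n : ℝ)| ≤ dist ((f ^ m) x) ((f ^ n) x)

/-- A sequence converges to infinity if the Gromov products `(x_i·x_j)_w → ∞`. -/
def ConvergesToInfinity (w : X) (u : ℕ → X) : Prop :=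
  Tendsto (fun p : ℕ × ℕ => gromovProduct w (u p.1) (u p.2)) atTop atTop

/-- Two sequences are equivalent if the mixed Gromov products tend to infinity. -/
def SeqEquiv (w : X) (u v : ℕ → X) : Prop :=
  Tendsto (fun p : ℕ × ℕ => gromovProduct w (u p.1) (v p.2)) atTop atTop

/-- Sequences converging to infinity. -/
def BoundarySeq (w : X) : Type u := {u : ℕ → X // ConvergesToInfinity w u}

/-- The Gromov boundary `∂X`: equivalence classes of sequences converging to infinity. -/
def GromovBoundary (w : X) : Type u :=
  Quot (fun u v : BoundarySeq w => SeqEquiv w u.1 v.1)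

/-- The boundary point determined by a sequence converging to infinity. -/
def boundaryPt (w : X) (u : BoundarySeq w) : GromovBoundary w := Quot.mk _ u

/-- `X̄ = X ∪ ∂X`. -/
def GromovClosure (w : X) : Type u := X ⊕ GromovBoundary w

theorem gromovProduct_basepoint_ge (w w' x y : X) :
    gromovProduct w x y - dist w w' ≤ gromovProduct w' x y := by
  have h1 : |dist w' x - dist w x| ≤ dist w' w := abs_dist_sub_le w' w x
  have h2 : |dist w' y - dist w y| ≤ dist w' w := abs_dist_sub_le w' w y
  rw [abs_le] at h1 h2
  unfold gromovProduct
  rw [dist_comm x w', dist_comm x w, dist_comm w w']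
  linarith [h1.1, h1.2, h2.1, h2.2]

theorem gromovProduct_isometry (f : X ≃ᵢ X) (w x y : X) :
    gromovProduct w (f x) (f y) = gromovProduct (f.symm w) x y := by
  unfold gromovProduct
  conv_lhs => rw [show w = f (f.symm w) from (f.apply_symm_apply w).symm]
  rw [f.dist_eq, f.dist_eq, f.dist_eq]

theorem convergesToInfinity_isometry {w : X} (f : X ≃ᵢ X) {u : ℕ → X}
    (h : ConvergesToInfinity w u) :
    ConvergesToInfinity w (fun n => f (u n)) := by
  refine tendsto_atTop_mono (fun p => ?_)
    (tendsto_atTop_add_const_right atTop (-dist w (f.symm w)) h)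
  have h1 := gromovProduct_basepoint_ge w (f.symm w) (u p.1) (u p.2)
  have h2 := gromovProduct_isometry f w (u p.1) (u p.2)
  dsimp only
  linarith

theorem seqEquiv_isometry {w : X} (f : X ≃ᵢ X) {u v : ℕ → X}
    (h : SeqEquiv w u v) :
    SeqEquiv w (fun n => f (u n)) (fun n => f (v n)) := by
  refine tendsto_atTop_mono (fun p => ?_)
    (tendsto_atTop_add_const_right atTop (-dist w (f.symm w)) h)
  have h1 := gromovProduct_basepoint_ge w (f.symm w) (u p.1) (v p.2)
  have h2 := gromovProduct_isometry f w (u p.1) (v p.2)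
  dsimp only
  linarith

/-- The extension of an isometry of `X` to the Gromov boundary. -/
def boundaryMap (w : X) (f : X ≃ᵢ X) : GromovBoundary w → GromovBoundary w :=
  Quot.lift
    (fun u : BoundarySeq w =>
      boundaryPt w ⟨fun n => f (u.1 n), convergesToInfinity_isometry f u.2⟩)
    (fun _ _ h => Quot.sound (seqEquiv_isometry f h))

/-- The extension of an isometry of `X` to `X̄ = X ∪ ∂X`. -/
def closureMap (w : X) (f : X ≃ᵢ X) : GromovClosure w → GromovClosure w
  | Sum.inl x => Sum.inl (f x)
  | Sum.inr a => Sum.inr (boundaryMap w f a)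

/-- The Gromov product of a boundary point with a point of `X̄`, extended by
taking infima of liminfs over representative sequences. -/
noncomputable def boundaryGP (w : X) (a : GromovBoundary w) : GromovClosure w → ℝ
  | Sum.inl p => sInf {r : ℝ | ∃ u : BoundarySeq w, boundaryPt w u = a ∧
      r = Filter.liminf (fun n => gromovProduct w (u.1 n) p) atTop}
  | Sum.inr b => sInf {r : ℝ | ∃ u v : BoundarySeq w, boundaryPt w u = a ∧
      boundaryPt w v = b ∧
      r = Filter.liminf (fun n => gromovProduct w (u.1 n) (v.1 n)) atTop}

/-- The basis for the topology on `X̄`: open balls in `X`, and the sets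
`N(â,k) = {y : (â·y)_w > k}` for boundary points `â` and `k > 0`. -/
def closureBasis (w : X) : Set (Set (GromovClosure w)) :=
  {S | (∃ (x : X) (r : ℝ), 0 < r ∧ S = Sum.inl '' Metric.ball x r) ∨
       (∃ (a : GromovBoundary w) (k : ℝ), 0 < k ∧ S = {y | k < boundaryGP w a y})}

/-- The topology on `X̄` generated by the basis above. -/
def closureTop (w : X) : TopologicalSpace (GromovClosure w) :=
  TopologicalSpace.generateFrom (closureBasis w)

/-- `S ⊆ X̄` is a neighborhood of `p ∈ X̄`. -/
def IsNeighborhood (w : X) (S : Set (GromovClosure w)) (p : GromovClosure w) : Prop :=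
  S ∈ @nhds (GromovClosure w) (closureTop w) p

/-- `a ∈ ∂X` is the attracting fixed point of `f`: it is represented by the
sequence `(f^n x)` for a point `x ∈ X`. -/
def IsAttractingFixedPt (w : X) (f : X ≃ᵢ X) (a : GromovBoundary w) : Prop :=
  ∃ (x : X) (h : ConvergesToInfinity w (fun n : ℕ => (f ^ (n : ℤ)) x)),
    boundaryPt w ⟨fun n : ℕ => (f ^ (n : ℤ)) x, h⟩ = a

/-- `a ∈ ∂X` is the repelling fixed point of `f`: the attracting fixed point of `f⁻¹`. -/
def IsRepellingFixedPt (w : X) (f : X ≃ᵢ X) (a : GromovBoundary w) : Prop :=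
  IsAttractingFixedPt w f⁻¹ a

/-- The concatenation `α · (f α)` of a path `α` defined on `[0, L]` with its
image under `f`, parametrized on `[0, 2L]`. -/
noncomputable def concatPath (f : X ≃ᵢ X) (α : ℝ → X) (L : ℝ) : ℝ → X :=
  fun s => if s ≤ L then α s else f (α (s - L))

section ChainLog

variable {Y : Type u} [MetricSpace Y] {δ : ℝ}

theorem gromov_nonneg (w x y : Y) : 0 ≤ gromovProduct w x y := by
  have := dist_triangle x w y
  unfold gromovProduct; linarith

theorem gromov_le_left (w x y : Y) : gromovProduct w x y ≤ dist x w := by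
  have h2 := dist_triangle w x y
  unfold gromovProduct
  rw [dist_comm w x] at h2
  linarith

theorem gromov_le_right (w x y : Y) : gromovProduct w x y ≤ dist w y := by
  have h2 := dist_triangle x y w
  unfold gromovProduct
  rw [dist_comm y w] at h2
  linarith

theorem chain_log (hY : IsDeltaHyperbolic Y δ) (n : ℕ) :
    1 ≤ n → ∀ c : ℕ → Y, ∀ γ : ℝ → Y, IsGeodesicSegment γ (c 0) (c n) →
    ∀ t ∈ Set.Icc (0:ℝ) (dist (c 0) (c n)), ∃ i < n,
      dist (γ t) (c i) ≤ δ * (Nat.clog 2 n : ℝ) + dist (c i) (c (i+1)) ∧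
      dist (γ t) (c (i+1)) ≤ δ * (Nat.clog 2 n : ℝ) + dist (c i) (c (i+1)) := by
  induction n using Nat.strong_induction_on with
  | _ n IH =>
    intro hn c γ hγ t ht
    rcases eq_or_lt_of_le hn with h1 | h2
    · -- n = 1
      subst h1
      refine ⟨0, one_pos, ?_, ?_⟩
      · have h := hγ.isom (Set.mem_Icc.mpr ⟨le_refl 0, dist_nonneg⟩) ht
        rw [hγ.source] at h
        rw [dist_comm] at h
        rw [h, zero_sub, abs_neg, abs_of_nonneg ht.1]
        simp [Nat.clog_one_right]
        exact ht.2
      · have h := hγ.isom ht (Set.mem_Icc.mpr ⟨dist_nonneg, le_refl _⟩)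
        rw [hγ.target] at h
        rw [h, abs_of_nonpos (by linarith [ht.2]), neg_sub]
        simp [Nat.clog_one_right]
        linarith [ht.1]
    · -- 2 ≤ n
      set m : ℕ := (n + 1) / 2 with hm
      have hm1 : 1 ≤ m := by omega
      have hmn : m < n := by omega
      have hnm1 : 1 ≤ n - m := by omega
      have hnmm : n - m ≤ m := by omega
      have hδ := hY.delta_nonneg
      have hclog : Nat.clog 2 n = Nat.clog 2 m + 1 := by
        rw [Nat.clog_of_two_le (by norm_num) h2]
        congr 1
      have hclogm : Nat.clog 2 m + 1 ≤ Nat.clog 2 n := hclog.ge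
      have hclognm : Nat.clog 2 (n - m) + 1 ≤ Nat.clog 2 n := by
        have := Nat.clog_mono_right 2 hnmm
        omega
      have hmul1 : δ * (Nat.clog 2 m : ℝ) + δ ≤ δ * (Nat.clog 2 n : ℝ) := by
        have hcl : (Nat.clog 2 m : ℝ) + 1 ≤ (Nat.clog 2 n : ℝ) := by exact_mod_cast hclogm
        nlinarith
      have hmul2 : δ * (Nat.clog 2 (n - m) : ℝ) + δ ≤ δ * (Nat.clog 2 n : ℝ) := by
        have hcl : (Nat.clog 2 (n - m) : ℝ) + 1 ≤ (Nat.clog 2 n : ℝ) := by exact_mod_cast hclognm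
        nlinarith
      obtain ⟨β', hβ'⟩ := hY.geodesic (c n) (c m)
      obtain ⟨γ₂, hγ₂⟩ := hY.geodesic (c m) (c 0)
      rcases hY.slim (c m) (c 0) (c n) γ β' γ₂ hγ hβ' hγ₂ t ht with
        ⟨u, hu, hclose⟩ | ⟨u, hu, hclose⟩
      · -- close to β' : c n → c m ; subchain c₂ j = c (n - j)
        have hsub : n - (n - m) = m := by omega
        have hβ'' : IsGeodesicSegment β' ((fun j => c (n - j)) 0) ((fun j => c (n - j)) (n - m)) := by
          simpa [hsub] using hβ'
        have hu' : u ∈ Set.Icc (0:ℝ) (dist ((fun j => c (n - j)) 0) ((fun j => c (n - j)) (n - m))) := by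
          simpa [hsub] using hu
        obtain ⟨i, hilt, hb1, hb2⟩ := IH (n - m) (by omega) hnm1 (fun j => c (n - j)) β' hβ'' u hu'
        have e2 : n - (i + 1) = n - i - 1 := by omega
        simp only [e2] at hb1 hb2
        have e1 : n - i - 1 + 1 = n - i := by omega
        have hsymm : dist (c (n - i)) (c (n - i - 1)) = dist (c (n - i - 1)) (c (n - i)) :=
          dist_comm _ _
        refine ⟨n - i - 1, by omega, ?_, ?_⟩
        · rw [e1]
          have tri := dist_triangle (γ t) (β' u) (c (n - i - 1))
          linarith
        · rw [e1]
          have tri := dist_triangle (γ t) (β' u) (c (n - i))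
          linarith
      · -- close to γ₂ : c m → c 0 ; subchain c₃ j = c (m - j)
        have hsub : m - m = 0 := by omega
        have hγ₂' : IsGeodesicSegment γ₂ ((fun j => c (m - j)) 0) ((fun j => c (m - j)) m) := by
          simpa [hsub] using hγ₂
        have hu' : u ∈ Set.Icc (0:ℝ) (dist ((fun j => c (m - j)) 0) ((fun j => c (m - j)) m)) := by
          simpa [hsub] using hu
        obtain ⟨i, hilt, hb1, hb2⟩ := IH m hmn hm1 (fun j => c (m - j)) γ₂ hγ₂' u hu'
        have e2 : m - (i + 1) = m - i - 1 := by omega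
        simp only [e2] at hb1 hb2
        have e1 : m - i - 1 + 1 = m - i := by omega
        have hsymm : dist (c (m - i)) (c (m - i - 1)) = dist (c (m - i - 1)) (c (m - i)) :=
          dist_comm _ _
        refine ⟨m - i - 1, by omega, ?_, ?_⟩
        · rw [e1]
          have tri := dist_triangle (γ t) (γ₂ u) (c (m - i - 1))
          linarith
        · rw [e1]
          have tri := dist_triangle (γ t) (γ₂ u) (c (m - i))
          linarith

end ChainLog

section Morse

theorem clog_le_real_log (N : ℕ) (hN : 1 ≤ N) :
    (Nat.clog 2 N : ℝ) ≤ Real.log N / Real.log 2 + 1 := by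
  have hlog2 : (0:ℝ) < Real.log 2 := Real.log_pos (by norm_num)
  rcases eq_or_lt_of_le hN with h1 | h2
  · rw [← h1]
    simp [Nat.clog_one_right]
  · have hc1 : 1 ≤ Nat.clog 2 N := Nat.clog_pos (by norm_num) h2
    have hpow : (2:ℕ) ^ (Nat.clog 2 N - 1) < N := Nat.pow_pred_clog_lt_self (by norm_num) h2
    have hpowR : (2:ℝ) ^ (Nat.clog 2 N - 1) < (N:ℝ) := by exact_mod_cast hpow
    have hlog : ((Nat.clog 2 N - 1 : ℕ) : ℝ) * Real.log 2 < Real.log N := by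
      calc ((Nat.clog 2 N - 1 : ℕ) : ℝ) * Real.log 2 = Real.log ((2:ℝ) ^ (Nat.clog 2 N - 1)) := by
            rw [Real.log_pow]
        _ < Real.log N := Real.log_lt_log (by positivity) hpowR
    have hcast : ((Nat.clog 2 N - 1 : ℕ) : ℝ) = (Nat.clog 2 N : ℝ) - 1 := by
      have := hc1; push_cast [Nat.cast_sub this]; ring
    rw [hcast] at hlog
    rw [div_add' _ _ _ (ne_of_gt hlog2), le_div_iff₀ hlog2]
    nlinarith

/-- The constant `K` used in the Morse bound. -/
def morseK (δ τ : ℝ) : ℝ := 24 * τ * δ / Real.log 2 + 3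

/-- The Morse-type stability constant. -/
def morseBound (δ τ : ℝ) : ℝ :=
  (4/3) * (2 * δ + τ + 1 + δ * Real.log (morseK δ τ) / Real.log 2)

theorem morseK_ge (δ τ : ℝ) (hδ : 0 ≤ δ) (hτ : 1 ≤ τ) : 3 ≤ morseK δ τ := by
  have hlog2 : (0:ℝ) < Real.log 2 := Real.log_pos (by norm_num)
  have : 0 ≤ 24 * τ * δ / Real.log 2 := by positivity
  unfold morseK; linarith

theorem morseBound_nonneg (δ τ : ℝ) (hδ : 0 ≤ δ) (hτ : 1 ≤ τ) : 0 ≤ morseBound δ τ := by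
  have hlog2 : (0:ℝ) < Real.log 2 := Real.log_pos (by norm_num)
  have hK := morseK_ge δ τ hδ hτ
  have h1 : 0 ≤ Real.log (morseK δ τ) := Real.log_nonneg (by linarith)
  have : 0 ≤ δ * Real.log (morseK δ τ) / Real.log 2 := by positivity
  unfold morseBound; nlinarith

end Morse

section Uniform

variable {Y : Type u} [MetricSpace Y] {δ : ℝ}

set_option maxHeartbeats 1000000 in
theorem chain_uniform (hY : IsDeltaHyperbolic Y δ) {τ : ℝ} (hτ : 1 ≤ τ)
    (n : ℕ) (hn : 1 ≤ n) (c : ℕ → Y)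
    (hstep : ∀ i, i < n → dist (c i) (c (i+1)) ≤ τ)
    (hlow : ∀ i, i ≤ n → ∀ j, j ≤ n → |(i:ℝ) - (j:ℝ)| ≤ τ * dist (c i) (c j))
    (γ : ℝ → Y) (hγ : IsGeodesicSegment γ (c 0) (c n)) :
    ∀ t ∈ Set.Icc (0:ℝ) (dist (c 0) (c n)), ∃ i, i ≤ n ∧
      dist (γ t) (c i) ≤ morseBound δ τ := by
  have hδ := hY.delta_nonneg
  have hτ0 : (0:ℝ) < τ := lt_of_lt_of_le one_pos hτ
  have hl2 : (0:ℝ) < Real.log 2 := Real.log_pos (by norm_num)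
  have hl22 : (0.69:ℝ) ≤ Real.log 2 := by
    have := Real.log_two_gt_d9; linarith
  set l2 := Real.log 2 with hl2def
  set L := dist (c 0) (c n) with hLdef
  have hL0 : 0 ≤ L := dist_nonneg
  have hne : (Finset.range (n+1)).Nonempty := ⟨0, by simp⟩
  set m : ℝ → ℝ := fun t => (Finset.range (n+1)).inf' hne (fun j => dist (γ t) (c j)) with hmdef
  have hm_le : ∀ t : ℝ, ∀ j ≤ n, m t ≤ dist (γ t) (c j) := by
    intro t j hj
    exact Finset.inf'_le _ (Finset.mem_range.mpr (by omega))
  have hm_ex : ∀ t : ℝ, ∃ j ≤ n, m t = dist (γ t) (c j) := by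
    intro t
    obtain ⟨j, hj, e⟩ := Finset.exists_mem_eq_inf' hne (fun j => dist (γ t) (c j))
    exact ⟨j, Nat.lt_succ_iff.mp (Finset.mem_range.mp hj), e⟩
  have hm0 : ∀ t : ℝ, 0 ≤ m t := by
    intro t; obtain ⟨j, _, e⟩ := hm_ex t; rw [e]; exact dist_nonneg
  set S := m '' (Set.Icc 0 L) with hSdef
  have hSne : S.Nonempty := ⟨m 0, 0, ⟨le_refl 0, hL0⟩, rfl⟩
  have hdist0 : ∀ t ∈ Set.Icc (0:ℝ) L, dist (γ t) (c 0) = t := by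
    intro t ht
    have h := hγ.isom (Set.mem_Icc.mpr ⟨le_refl 0, hL0⟩) ht
    rw [hγ.source] at h
    rw [dist_comm, h, zero_sub, abs_neg, abs_of_nonneg ht.1]
  have hdistL : ∀ t ∈ Set.Icc (0:ℝ) L, dist (γ t) (c n) = L - t := by
    intro t ht
    have h := hγ.isom ht (Set.mem_Icc.mpr ⟨hL0, le_refl L⟩)
    rw [hγ.target] at h
    rw [h, abs_of_nonpos (by linarith [ht.2]), neg_sub]
  have hbdd : BddAbove S := by
    refine ⟨L, ?_⟩
    rintro _ ⟨t, ht, rfl⟩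
    calc m t ≤ dist (γ t) (c 0) := hm_le t 0 (by omega)
      _ = t := hdist0 t ht
      _ ≤ L := ht.2
  set D0 := sSup S with hD0def
  have hmD0 : ∀ t ∈ Set.Icc (0:ℝ) L, m t ≤ D0 := fun t ht => le_csSup hbdd ⟨t, ht, rfl⟩
  have hD00 : 0 ≤ D0 := le_trans (hm0 0) (hmD0 0 ⟨le_refl 0, hL0⟩)
  -- main claim: D0 ≤ morseBound δ τ
  have hmain : D0 ≤ morseBound δ τ := by
    obtain ⟨d, ⟨t0, ht0, rfl⟩, hd⟩ := exists_lt_of_lt_csSup hSne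
      (show D0 - 1 < D0 by linarith)
    set t1 := max 0 (t0 - 2*D0) with ht1def
    set t2 := min L (t0 + 2*D0) with ht2def
    have ht1 : t1 ∈ Set.Icc (0:ℝ) L := ⟨le_max_left _ _, max_le hL0 (by linarith [ht0.2])⟩
    have ht2 : t2 ∈ Set.Icc (0:ℝ) L := ⟨le_min hL0 (by linarith [ht0.1]), min_le_left _ _⟩
    have h1t0 : t1 ≤ t0 := max_le ht0.1 (by linarith)
    have ht02 : t0 ≤ t2 := le_min ht0.2 (by linarith)
    have h1lb : t0 - 2*D0 ≤ t1 := le_max_right _ _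
    have h2ub : t2 ≤ t0 + 2*D0 := min_le_right _ _
    obtain ⟨i1, hi1n, hi1⟩ := hm_ex t1
    obtain ⟨i2, hi2n, hi2⟩ := hm_ex t2
    have hmt1 : m t1 ≤ D0 := hmD0 _ ht1
    have hmt2 : m t2 ≤ D0 := hmD0 _ ht2
    have hγ12 : dist (γ t1) (γ t2) = t2 - t1 := by
      rw [hγ.isom ht1 ht2, abs_of_nonpos (by linarith), neg_sub]
    have hcc : dist (c i1) (c i2) ≤ 6 * D0 := by
      calc dist (c i1) (c i2) ≤ dist (c i1) (γ t1) + dist (γ t1) (γ t2) + dist (γ t2) (c i2) :=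
            dist_triangle4 _ _ _ _
        _ ≤ D0 + 4*D0 + D0 := by
            rw [dist_comm (c i1), hγ12]
            linarith [hi1, hi2, hmt1, hmt2, h1lb, h2ub, h1t0, ht02]
        _ = 6 * D0 := by ring
    set d12 : ℕ := if i1 ≤ i2 then i2 - i1 else i1 - i2 with hd12def
    set cIdx : ℕ → ℕ := fun j => if i1 ≤ i2 then i1 + j else i1 - j with hcIdxdef
    have hcIdx_le : ∀ j ≤ d12, cIdx j ≤ n := by
      intro j hj
      by_cases h : i1 ≤ i2
      · have h1 : cIdx j = i1 + j := by simp [hcIdxdef, h]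
        have h2 : d12 = i2 - i1 := by simp [hd12def, h]
        omega
      · have h1 : cIdx j = i1 - j := by simp [hcIdxdef, h]
        have h2 : d12 = i1 - i2 := by simp [hd12def, h]
        omega
    have hc0 : cIdx 0 = i1 := by
      by_cases h : i1 ≤ i2 <;> simp [hcIdxdef, h]
    have hcd : cIdx d12 = i2 := by
      by_cases h : i1 ≤ i2 <;> simp [hcIdxdef, hd12def, h] <;> omega
    have hstep' : ∀ j, j < d12 → dist (c (cIdx j)) (c (cIdx (j+1))) ≤ τ := by
      intro j hj
      by_cases h : i1 ≤ i2
      · simp only [hcIdxdef, hd12def, if_pos h] at hj ⊢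
        have e : i1 + (j+1) = (i1 + j) + 1 := by ring
        rw [e]
        exact hstep _ (by omega)
      · simp only [hcIdxdef, hd12def, if_neg h] at hj ⊢
        have e : i1 - j = (i1 - (j+1)) + 1 := by omega
        rw [e, dist_comm]
        exact hstep _ (by omega)
    have hd12R : (d12:ℝ) ≤ 6 * τ * D0 := by
      have habs : (d12:ℝ) = |(i1:ℝ) - (i2:ℝ)| := by
        rcases le_or_gt i1 i2 with h | h
        · rw [hd12def, if_pos h, abs_sub_comm,
            abs_of_nonneg (sub_nonneg.mpr (Nat.cast_le.mpr h))]
          push_cast [Nat.cast_sub h]; ring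
        · rw [hd12def, if_neg (not_le.mpr h),
            abs_of_nonneg (sub_nonneg.mpr (Nat.cast_le.mpr h.le))]
          push_cast [Nat.cast_sub h.le]; ring
      rw [habs]
      calc |(i1:ℝ) - (i2:ℝ)| ≤ τ * dist (c i1) (c i2) := hlow i1 hi1n i2 hi2n
        _ ≤ τ * (6 * D0) := mul_le_mul_of_nonneg_left hcc (le_of_lt hτ0)
        _ = 6 * τ * D0 := by ring
    set N := d12 + 2 with hNdef
    set e : ℕ → Y := fun j => if j = 0 then γ t1 else if j ≤ d12 + 1 then c (cIdx (j-1)) else γ t2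
      with hedef
    have he0 : e 0 = γ t1 := by simp [hedef]
    have heN : e N = γ t2 := by
      simp only [hedef, hNdef]
      rw [if_neg (by omega), if_neg (by omega)]
    have hdEE : dist (e 0) (e N) = t2 - t1 := by rw [he0, heN, hγ12]
    have hγab : IsGeodesicSegment (fun u => γ (t1 + u)) (e 0) (e N) := by
      refine ⟨?_, ?_, ?_⟩
      · rw [add_zero, he0]
      · rw [hdEE]
        have e3 : t1 + (t2 - t1) = t2 := by ring
        rw [e3, heN]
      · intro s u hs hu
        rw [hdEE] at hs hu
        have hmem1 : t1 + s ∈ Set.Icc (0:ℝ) L :=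
          ⟨by linarith [ht1.1, hs.1], by linarith [hs.2, ht2.2]⟩
        have hmem2 : t1 + u ∈ Set.Icc (0:ℝ) L :=
          ⟨by linarith [ht1.1, hu.1], by linarith [hu.2, ht2.2]⟩
        rw [hγ.isom hmem1 hmem2]
        congr 1
        ring
    have htstar : t0 - t1 ∈ Set.Icc (0:ℝ) (dist (e 0) (e N)) :=
      ⟨by linarith, by rw [hdEE]; linarith⟩
    obtain ⟨i, hiN, hb1, hb2⟩ := chain_log hY N (by omega) e (fun u => γ (t1 + u)) hγab
      (t0 - t1) htstar
    have e3 : t1 + (t0 - t1) = t0 := by ring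
    simp only [e3] at hb1 hb2
    set B := δ * (Nat.clog 2 N : ℝ) with hBdef
    have hB0 : 0 ≤ B := by positivity
    -- case analysis giving D0 - 1 ≤ B + τ
    have hkey : D0 - 1 ≤ B + τ := by
      by_cases hi0 : i = 0
      · subst hi0
        have he1 : e 1 = c i1 := by
          simp only [hedef]
          rw [if_neg (by omega), if_pos (by omega)]
          simp [hc0]
        rw [he0, he1] at hb1
        have hee : dist (γ t1) (c i1) = m t1 := hi1.symm
        by_cases hcase : t0 - 2*D0 ≤ 0
        · have ht1e : t1 = 0 := max_eq_left (by linarith)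
          have hsrc : γ t1 = c 0 := by rw [ht1e, hγ.source]
          have hm1z : m t1 ≤ 0 := by
            calc m t1 ≤ dist (γ t1) (c 0) := hm_le t1 0 (by omega)
              _ = 0 := by rw [hsrc, dist_self]
          have : m t0 ≤ dist (γ t0) (c 0) := hm_le t0 0 (by omega)
          rw [← hsrc] at this
          linarith [hb1, hee]
        · have ht1e : t1 = t0 - 2*D0 := max_eq_right (by linarith)
          have hdd : dist (γ t0) (γ t1) = 2*D0 := by
            rw [hγ.isom ht0 ht1, ht1e, abs_of_nonneg (by linarith)]
            ring
          rw [hdd] at hb1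
          linarith [hb1, hee, hmt1]
      · by_cases hiL : i = d12 + 1
        · subst hiL
          have hei : e (d12 + 1) = c i2 := by
            simp only [hedef]
            rw [if_neg (by omega), if_pos (by omega)]
            simp [hcd]
          have heiN : e (d12 + 1 + 1) = γ t2 := by
            simp only [hedef]
            rw [if_neg (by omega), if_neg (by omega)]
          rw [hei, heiN] at hb1 hb2
          have hee : dist (c i2) (γ t2) = m t2 := by rw [dist_comm]; exact hi2.symm
          by_cases hcase : L ≤ t0 + 2*D0
          · have ht2e : t2 = L := min_eq_left hcase
            have htgt : γ t2 = c n := by rw [ht2e, hγ.target]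
            have hm2z : m t2 ≤ 0 := by
              calc m t2 ≤ dist (γ t2) (c n) := hm_le t2 n (by omega)
                _ = 0 := by rw [htgt, dist_self]
            have : m t0 ≤ dist (γ t0) (c n) := hm_le t0 n (by omega)
            rw [← htgt] at this
            linarith [hb2, hee]
          · have ht2e : t2 = t0 + 2*D0 := min_eq_right (by linarith)
            have hdd : dist (γ t0) (γ t2) = 2*D0 := by
              rw [hγ.isom ht0 ht2, ht2e, abs_of_nonpos (by linarith)]
              ring
            rw [hdd] at hb2
            linarith [hb2, hee, hmt2]
        · -- interior edge
          have hi1' : 1 ≤ i := by omega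
          have hi2' : i ≤ d12 := by omega
          have hei : e i = c (cIdx (i-1)) := by
            simp only [hedef]
            rw [if_neg (by omega), if_pos (by omega)]
          have heip : e (i+1) = c (cIdx i) := by
            simp only [hedef]
            rw [if_neg (by omega), if_pos (by omega)]
            congr 1
          have hstepB : dist (e i) (e (i+1)) ≤ τ := by
            rw [hei, heip]
            have e4 : i - 1 + 1 = i := by omega
            have := hstep' (i-1) (by omega)
            rw [e4] at this
            exact this
          have : m t0 ≤ dist (γ t0) (c (cIdx (i-1))) :=
            hm_le t0 _ (hcIdx_le (i-1) (by omega))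
          rw [← hei] at this
          linarith [hb1]
    -- analytic part
    set K := morseK δ τ with hKdef
    have hK3 : (3:ℝ) ≤ K := morseK_ge δ τ hδ hτ
    have hK0 : (0:ℝ) < K := by linarith
    have hKl2 : K * l2 = 24*τ*δ + 3*l2 := by
      rw [hKdef]
      unfold morseK
      field_simp
      rw [hl2def]; ring
    have hN1 : 1 ≤ N := by omega
    have hNpos : (0:ℝ) < (N:ℝ) := by exact_mod_cast Nat.pos_of_ne_zero (by omega)
    have hNle : (N:ℝ) ≤ 6*τ*D0 + 2 := by
      have : (N:ℝ) = (d12:ℝ) + 2 := by rw [hNdef]; push_cast; ring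
      rw [this]; linarith [hd12R]
    have hclogN : (Nat.clog 2 N : ℝ) ≤ Real.log N / l2 + 1 := clog_le_real_log N hN1
    have hlogN : Real.log N ≤ (6*τ*D0 + 2)/K + Real.log K - 1 := by
      have h1 := Real.log_le_sub_one_of_pos (show (0:ℝ) < (N:ℝ)/K by positivity)
      rw [Real.log_div (ne_of_gt hNpos) (ne_of_gt hK0)] at h1
      have h2 : (N:ℝ)/K ≤ (6*τ*D0+2)/K := by gcongr
      linarith
    -- assemble
    have hq1 : δ * Real.log (N:ℝ) ≤ δ * ((6*τ*D0+2)/K + Real.log K - 1) :=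
      mul_le_mul_of_nonneg_left hlogN hδ
    have hA : δ * ((6*τ*D0+2)/K) ≤ (l2/4)*D0 + δ*l2 := by
      rw [← mul_div_assoc, div_le_iff₀ hK0]
      nlinarith [hKl2, mul_nonneg hδ hD00, mul_nonneg (mul_nonneg hδ hτ0.le) hD00,
        mul_nonneg hl2.le hD00, mul_nonneg (mul_nonneg hτ0.le hδ) hδ,
        mul_le_mul_of_nonneg_left hl22 hδ]
    have hCl2 : (Nat.clog 2 N : ℝ) * l2 ≤ Real.log (N:ℝ) + l2 := by
      have h := mul_le_mul_of_nonneg_right hclogN hl2.le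
      rw [add_mul, div_mul_cancel₀ _ (ne_of_gt hl2), one_mul] at h
      exact h
    have hBl2 : B * l2 ≤ δ * Real.log (N:ℝ) + δ * l2 := by
      calc B * l2 = δ * ((Nat.clog 2 N : ℝ) * l2) := by rw [hBdef]; ring
        _ ≤ δ * (Real.log (N:ℝ) + l2) := mul_le_mul_of_nonneg_left hCl2 hδ
        _ = δ * Real.log (N:ℝ) + δ*l2 := by ring
    have hkey2 : D0 * l2 ≤ (B + (τ + 1)) * l2 :=
      mul_le_mul_of_nonneg_right (by linarith) hl2.le
    have hfin2 : (3/4)*(D0*l2) ≤ 2*δ*l2 + δ*Real.log K + (τ+1)*l2 := by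
      have hexpand : (B + (τ + 1)) * l2 = B * l2 + (τ+1)*l2 := by ring
      have hq1' : δ * Real.log (N:ℝ) ≤ δ * ((6*τ*D0+2)/K) + δ * Real.log K - δ := by
        nlinarith [hq1]
      rw [hexpand] at hkey2
      linarith [hkey2, hBl2, hq1', hA, hδ]
    have hdm : δ * Real.log K / l2 * l2 = δ * Real.log K := div_mul_cancel₀ _ (ne_of_gt hl2)
    have hexp : morseBound δ τ * l2 = (4/3)*(2*δ+τ+1)*l2 + (4/3)*(δ*Real.log K / l2 * l2) := by
      unfold morseBound
      rw [← hKdef, ← hl2def]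
      ring
    have hgoal : D0 * l2 ≤ morseBound δ τ * l2 := by
      rw [hexp, hdm]
      linarith [hfin2]
    exact le_of_mul_le_mul_right hgoal hl2
  intro t ht
  obtain ⟨j, hjn, hj⟩ := hm_ex t
  exact ⟨j, hjn, by rw [← hj]; exact le_trans (hmD0 t ht) hmain⟩

end Uniform


set_option maxHeartbeats 1000000 in
/-- For a hyperbolic isometry `f` with quasi-geodesic orbit constant
`τ`, there is a constant `D ≥ 0` depending only on `δ` and `τ` such that for any
`z` and any point `x_z` of the orbit `A = {f^n x}` nearest to `z`,
`d(x,z) ≥ d(x,x_z) + d(x_z,z) − D`. -/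
theorem nearest_orbit_point_almost_geodesic (δ τ : ℝ) (hτ : 1 ≤ τ) :
    ∃ D : ℝ, 0 ≤ D ∧
      ∀ (Y : Type u) [MetricSpace Y], IsDeltaHyperbolic Y δ →
      ∀ f : Y ≃ᵢ Y, IsHyperbolicIsometry f →
      ∀ x : Y,
      (∀ m n : ℤ, (1 / τ) * |(m : ℝ) - (n : ℝ)| ≤ dist ((f ^ m) x) ((f ^ n) x) ∧
        dist ((f ^ m) x) ((f ^ n) x) ≤ τ * |(m : ℝ) - (n : ℝ)|) →
      ∀ z xz : Y,
        (∃ k : ℤ, xz = (f ^ k) x) →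
        dist xz z = sInf {d : ℝ | ∃ k : ℤ, d = dist ((f ^ k) x) z} →
        dist x xz + dist xz z - D ≤ dist x z := by
  refine ⟨2 * (morseBound (max δ 0) τ + max δ 0), ?_, ?_⟩
  · have h1 : (0:ℝ) ≤ max δ 0 := le_max_right _ _
    have := morseBound_nonneg (max δ 0) τ h1 hτ
    linarith
  · intro Y _ hY f _ x hq z xz hk hr
    obtain ⟨k, rfl⟩ := hk
    have hδ := hY.delta_nonneg
    have hmax : max δ 0 = δ := max_eq_left hδ
    rw [hmax]
    have hmb := morseBound_nonneg δ τ hδ hτ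
    by_cases hk0 : k = 0
    · subst hk0
      have hxx : (f ^ (0:ℤ)) x = x := by simp
      rw [hxx]
      rw [dist_self]
      linarith
    · set n := k.natAbs with hn
      have hn1 : 1 ≤ n := by
        have := Int.natAbs_pos.mpr hk0
        omega
      set ε : ℕ → ℤ := fun j => if 0 ≤ k then k - j else k + j with hε
      set c : ℕ → Y := fun j => (f ^ (ε j)) x with hc
      have hε0 : ε 0 = k := by
        simp only [hε]
        split_ifs <;> simp
      have hεn : ε n = 0 := by
        simp only [hε, hn]
        split_ifs with h <;> omega
      have hc0 : c 0 = (f ^ k) x := by rw [hc]; simp only [hε0]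
      have hcn : c n = x := by
        rw [hc]
        simp only [hεn]
        simp
      have habs : ∀ i j : ℕ, |((ε i : ℤ):ℝ) - ((ε j : ℤ):ℝ)| = |(i:ℝ) - (j:ℝ)| := by
        intro i j
        simp only [hε]
        split_ifs with h
        · push_cast
          rw [show (k:ℝ) - i - ((k:ℝ) - j) = -((i:ℝ) - j) by ring, abs_neg]
        · push_cast
          rw [show (k:ℝ) + i - ((k:ℝ) + j) = (i:ℝ) - j by ring]
      have hτ0 : (0:ℝ) < τ := lt_of_lt_of_le one_pos hτ
      have hstep : ∀ i, i < n → dist (c i) (c (i+1)) ≤ τ := by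
        intro i _
        have h := (hq (ε i) (ε (i+1))).2
        rw [habs i (i+1)] at h
        have h2 : |(i:ℝ) - ((i+1:ℕ):ℝ)| = 1 := by
          push_cast
          rw [show (i:ℝ) - (i+1) = -1 by ring]
          simp
        rw [h2, mul_one] at h
        exact h
      have hlow : ∀ i, i ≤ n → ∀ j, j ≤ n → |(i:ℝ)-(j:ℝ)| ≤ τ * dist (c i) (c j) := by
        intro i _ j _
        have h := (hq (ε i) (ε j)).1
        rw [habs i j] at h
        calc |(i:ℝ)-(j:ℝ)| = τ * ((1/τ) * |(i:ℝ)-(j:ℝ)|) := by field_simp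
          _ ≤ τ * dist (c i) (c j) := mul_le_mul_of_nonneg_left h hτ0.le
      obtain ⟨γ', hγ'⟩ := hY.geodesic ((f^k) x) x
      obtain ⟨α, hα⟩ := hY.geodesic x z
      obtain ⟨β, hβ⟩ := hY.geodesic z ((f^k) x)
      have hins := (hY.insize ((f^k) x) x z α β γ' hα hβ hγ').2.1
      set p := gromovProduct ((f^k) x) x z with hp
      set cG := gromovProduct z ((f^k) x) x with hcG
      have hp0 : 0 ≤ p := gromov_nonneg _ _ _
      have hpxz : p ≤ dist x ((f^k) x) := gromov_le_left _ _ _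
      have hcG0 : 0 ≤ cG := gromov_nonneg _ _ _
      have hcGle : cG ≤ dist z ((f^k) x) := by
        rw [dist_comm]
        exact gromov_le_left _ _ _
      have hβc : dist (β cG) z = cG := by
        have h := hβ.isom (Set.mem_Icc.mpr ⟨hcG0, hcGle⟩)
          (Set.mem_Icc.mpr ⟨le_refl 0, dist_nonneg⟩)
        rw [hβ.source] at h
        rw [h, sub_zero, abs_of_nonneg hcG0]
      have hγpz : dist (γ' p) z ≤ δ + cG := by
        have tri := dist_triangle (γ' p) (β cG) z
        have hcm : dist (γ' p) (β cG) = dist (β cG) (γ' p) := dist_comm _ _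
        linarith [hins, hβc]
      have hcGval : cG = dist ((f^k) x) z - p := by
        rw [hcG, hp]
        unfold gromovProduct
        rw [dist_comm z x, dist_comm ((f^k) x) x]
        ring
      have hrmin : ∀ e : ℤ, dist ((f^k) x) z ≤ dist ((f^e) x) z := by
        intro e
        rw [hr]
        exact csInf_le ⟨0, by rintro _ ⟨j, rfl⟩; exact dist_nonneg⟩ ⟨e, rfl⟩
      have hγ'' : IsGeodesicSegment γ' (c 0) (c n) := by rw [hc0, hcn]; exact hγ'
      have hpIcc : p ∈ Set.Icc (0:ℝ) (dist (c 0) (c n)) := by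
        rw [hc0, hcn]
        refine ⟨hp0, ?_⟩
        rw [dist_comm]
        exact hpxz
      obtain ⟨i, hin, hi⟩ := chain_uniform hY hτ n hn1 c hstep hlow γ' hγ'' p hpIcc
      have hci : dist (c i) z = dist ((f ^ (ε i)) x) z := by rw [hc]
      have hzi : dist ((f^k) x) z ≤ dist (c i) z := by rw [hci]; exact hrmin (ε i)
      have tri2 : dist (c i) z ≤ dist (c i) (γ' p) + dist (γ' p) z := dist_triangle _ _ _
      have hcm2 : dist (c i) (γ' p) = dist (γ' p) (c i) := dist_comm _ _
      have hple : p ≤ morseBound δ τ + δ := by linarith [hi, hγpz, hcGval, hzi, tri2]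
      have hpdef : p = (dist x ((f^k) x) + dist ((f^k) x) z - dist x z)/2 := rfl
      linarith [hpdef, hple]
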